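/- If C is a Waldhausen category satisfying the extension axiom and such that whenever X → 0 is a weak equivalence then 0 → X is also a weak equivalence, then the horizontal weak equivalences of the associated squares category are exactly the trivial cofibrations of C (cofibrations that are also weak equivalences). -/
import Mathlib


open CategoryTheory CategoryTheory.Limits

/-- A Waldhausen category: a pointed category with classes of cofibrations and weak
equivalences, such that the basepoint is a zero object, cofibrations contain the
isomorphisms and all maps out of the basepoint and are closed under composition,
pushouts along cofibrations exist and cofibrations are stable under pushout, and
weak equivalences contain the isomorphisms, are closed under composition and
satisfy the gluing axiom. -/
structure Waldhausen (C : Type) [Category C] where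
  cof : MorphismProperty C
  we : MorphismProperty C
  pt : C
  pt_isZero : IsZero pt
  cof_id : ∀ X : C, cof (𝟙 X)
  cof_comp : ∀ {X Y Z : C} (f : X ⟶ Y) (g : Y ⟶ Z), cof f → cof g → cof (f ≫ g)
  cof_iso : ∀ {X Y : C} (e : X ≅ Y), cof e.hom
  cof_from_pt : ∀ {X : C} (f : pt ⟶ X), cof f
  exists_pushout : ∀ {A B X : C} (f : A ⟶ B) (g : A ⟶ X), cof f →
    ∃ (P : C) (i : B ⟶ P) (j : X ⟶ P), IsPushout f g i j
  cof_pushout : ∀ {A B X P : C} (f : A ⟶ B) (g : A ⟶ X) (i : B ⟶ P) (j : X ⟶ P),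
    cof f → IsPushout f g i j → cof j
  we_id : ∀ X : C, we (𝟙 X)
  we_comp : ∀ {X Y Z : C} (f : X ⟶ Y) (g : Y ⟶ Z), we f → we g → we (f ≫ g)
  we_iso : ∀ {X Y : C} (e : X ≅ Y), we e.hom
  gluing : ∀ {A B X P A' B' X' P' : C} {f : A ⟶ B} {g : A ⟶ X} {i : B ⟶ P} {j : X ⟶ P}
    {f' : A' ⟶ B'} {g' : A' ⟶ X'} {i' : B' ⟶ P'} {j' : X' ⟶ P'}
    (a : A ⟶ A') (b : B ⟶ B') (x : X ⟶ X') (p : P ⟶ P'),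
    cof f → cof f' → IsPushout f g i j → IsPushout f' g' i' j' →
    we a → we b → we x →
    f ≫ b = a ≫ f' → g ≫ x = a ≫ g' → i ≫ p = b ≫ i' → j ≫ p = x ≫ j' →
    we p

variable {C : Type} [Category C]

/-- The unique map to the basepoint. -/
noncomputable def Waldhausen.toPt (W : Waldhausen C) (X : C) : X ⟶ W.pt :=
  W.pt_isZero.from_ X

/-- In the squares category associated to a Waldhausen category, a cofibration
`f : A ⟶ B` is a horizontal weak equivalence if the square with top row `f`,
vertical edges `A ⟶ pt` and `B ⟶ pt`, and bottom row the identity of `pt` is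
distinguished, i.e. the induced map `B/A = pt ⊔_A B ⟶ pt` is a weak
equivalence. -/
def Waldhausen.IsHorWE (W : Waldhausen C) {A B : C} (f : A ⟶ B) : Prop :=
  W.cof f ∧
    ∀ (P : C) (i : B ⟶ P) (j : W.pt ⟶ P), IsPushout f (W.toPt A) i j →
      ∀ d : P ⟶ W.pt, i ≫ d = W.toPt B → j ≫ d = 𝟙 W.pt → W.we d

/-- If a Waldhausen category satisfies the extension axiom and has the property
that whenever `X ⟶ pt` is a weak equivalence then `pt ⟶ X` is one too, then the
horizontal weak equivalences of the associated squares category are exactly the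
trivial cofibrations. -/
theorem horWE_iff_trivialCof (W : Waldhausen C)
    (ext : ∀ {A B A' B' Q Q' : C} (f : A ⟶ B) (f' : A' ⟶ B') (a : A ⟶ A') (b : B ⟶ B')
      (q : B ⟶ Q) (z : W.pt ⟶ Q) (q' : B' ⟶ Q') (z' : W.pt ⟶ Q') (m : Q ⟶ Q'),
      W.cof f → W.cof f' → f ≫ b = a ≫ f' →
      IsPushout f (W.toPt A) q z → IsPushout f' (W.toPt A') q' z' →
      q ≫ m = b ≫ q' → z ≫ m = z' → W.we a → W.we m → W.we b)
    (sat : ∀ {X : C} (u : X ⟶ W.pt), W.we u → ∀ v : W.pt ⟶ X, W.we v) :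
    ∀ {A B : C} (f : A ⟶ B), W.IsHorWE f ↔ (W.cof f ∧ W.we f) := by
  intro A B f
  constructor
  · rintro ⟨hcof, hP⟩
    refine ⟨hcof, ?_⟩
    obtain ⟨P, i, j, hpo⟩ := W.exists_pushout f (W.toPt A) hcof
    have hd : W.we (W.toPt P) :=
      hP P i j hpo (W.toPt P) (W.pt_isZero.eq_of_tgt _ _) (W.pt_isZero.eq_of_tgt _ _)
    have hj : W.we j := sat (W.toPt P) hd j
    have hpo₁ : IsPushout (𝟙 A) (W.toPt A) (W.toPt A) (𝟙 W.pt) :=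
      IsPushout.of_horiz_isIso ⟨by simp⟩
    exact ext (𝟙 A) f (𝟙 A) f (W.toPt A) (𝟙 W.pt) i j j (W.cof_id A) hcof (by simp)
      hpo₁ hpo hpo.w.symm (by simp) (W.we_id A) hj
  · rintro ⟨hcof, hwe⟩
    refine ⟨hcof, ?_⟩
    intro P i j hpo d hid hjd
    have hpo' : IsPushout (𝟙 B) (W.toPt B) (W.toPt B) (𝟙 W.pt) :=
      IsPushout.of_horiz_isIso ⟨by simp⟩
    exact W.gluing f (𝟙 B) (𝟙 W.pt) d hcof (W.cof_id B) hpo hpo' hwe (W.we_id B)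
      (W.we_id W.pt) (by simp) (W.pt_isZero.eq_of_tgt _ _) (by simpa using hid)
      (by simpa using hjd)
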